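/- Let N ≥ 1, let S ⊆ ℝ^N be compact, let h ∈ B_S, and let D ⊆ ℝ^N be a measurable set. Let μ > 0 and 0 < τ < 2/(1 + 2μ). Then the regularized operator \hat{T}_h^{(D)} defined by \hat{T}_h^{(D)} f = P_S((1 − μτ) f + τ χ_D(h − f)) is a Banach contraction on B_S with Lipschitz constant 1 − μτ: for all f, g ∈ B_S, ‖\hat{T}_h^{(D)} f − \hat{T}_h^{(D)} g‖ ≤ (1 − μτ)‖f − g‖, and 0 < 1 − μτ < 1. -/

import Mathlib

open MeasureTheory FourierTransform Filter

noncomputable section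

/-- The Hilbert space `L²(ℝᴺ; ℂ)` of square-integrable functions on `ℝᴺ`. -/
abbrev L2Space (N : ℕ) : Type :=
  Lp ℂ 2 (volume : Measure (EuclideanSpace ℝ (Fin N)))

/-- `f ∈ L²(ℝᴺ)` is bandlimited to `S`: its Fourier transform vanishes (a.e.) outside `S`;
equivalently, `f` agrees a.e. with the inverse Fourier transform of an integrable function `F`
vanishing outside `S`. -/
def IsBandlimited {N : ℕ} (S : Set (EuclideanSpace ℝ (Fin N))) (f : L2Space N) : Prop :=
  ∃ F : EuclideanSpace ℝ (Fin N) → ℂ,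
    Integrable F ∧ (∀ k, k ∉ S → F k = 0) ∧
      (f : EuclideanSpace ℝ (Fin N) → ℂ) =ᵐ[volume] 𝓕⁻ F

/-- Multiplication of `f ∈ L²` by the indicator function `χ_D`, as an element of `L²`. -/
def chiMul {N : ℕ} {D : Set (EuclideanSpace ℝ (Fin N))} (hD : MeasurableSet D)
    (f : L2Space N) : L2Space N :=
  ((Lp.memLp f).indicator hD).toLp (D.indicator f)

/-- The orthogonal projection of `L²(ℝᴺ)` onto a closed subspace `K`. -/
def projOf {N : ℕ} (K : Submodule ℂ (L2Space N)) (hK : IsClosed (K : Set (L2Space N))) :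
    L2Space N → L2Space N :=
  haveI : CompleteSpace K := hK.completeSpace_coe
  fun f => (K.orthogonalProjectionOnto f : L2Space N)

/-- The operator `T_h^{(D)} f = P_S (f + χ_D (h − f))` (single region). -/
def Tsingle {N : ℕ} (K : Submodule ℂ (L2Space N)) (hK : IsClosed (K : Set (L2Space N)))
    {D : Set (EuclideanSpace ℝ (Fin N))} (hD : MeasurableSet D)
    (h f : L2Space N) : L2Space N :=
  projOf K hK (f + chiMul hD (h - f))

/-- The regularized operator `T̂_h^{(D)} f = P_S ((1 − μτ) f + τ χ_D (h − f))`. -/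
def TsingleReg {N : ℕ} (K : Submodule ℂ (L2Space N)) (hK : IsClosed (K : Set (L2Space N)))
    {D : Set (EuclideanSpace ℝ (Fin N))} (hD : MeasurableSet D)
    (μ τ : ℝ) (h f : L2Space N) : L2Space N :=
  projOf K hK ((1 - μ * τ) • f + τ • chiMul hD (h - f))

/-- For `h ∈ B_S`, `D` measurable, `μ > 0` and `0 < τ < 2/(1 + 2μ)`, the
regularized operator `T̂_h^{(D)} f = P_S((1 − μτ) f + τ χ_D(h − f))` is a Banach contraction
on `B_S` with Lipschitz constant `1 − μτ ∈ (0,1)`. -/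
theorem regularized_contraction_single (N : ℕ) (hN : 1 ≤ N)
    (S : Set (EuclideanSpace ℝ (Fin N))) (hS : IsCompact S)
    (K : Submodule ℂ (L2Space N))
    (hKset : (K : Set (L2Space N)) = {f : L2Space N | IsBandlimited S f})
    (hK : IsClosed (K : Set (L2Space N)))
    (h : L2Space N) (hh : IsBandlimited S h)
    (D : Set (EuclideanSpace ℝ (Fin N))) (hD : MeasurableSet D)
    (μ τ : ℝ) (hμ : 0 < μ) (hτ0 : 0 < τ) (hτ : τ < 2 / (1 + 2 * μ)) :
    (∀ f g : L2Space N, IsBandlimited S f → IsBandlimited S g →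
        ‖TsingleReg K hK hD μ τ h f - TsingleReg K hK hD μ τ h g‖ ≤
          (1 - μ * τ) * ‖f - g‖) ∧
      0 < 1 - μ * τ ∧ 1 - μ * τ < 1 := by
  have hden : (0:ℝ) < 1 + 2 * μ := by linarith
  have hτ' : τ * (1 + 2 * μ) < 2 := by
    have := (lt_div_iff₀ hden).mp hτ
    linarith
  have hμτ : μ * τ < 1 := by nlinarith
  have hc0 : 0 < 1 - μ * τ := by linarith
  refine ⟨?_, hc0, by nlinarith⟩
  intro f g _ _
  haveI : CompleteSpace K := hK.completeSpace_coe
  set c : ℝ := 1 - μ * τ with hc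
  -- chiMul is additive on differences
  have key : ∀ a b : L2Space N, chiMul hD (a - b) = chiMul hD a - chiMul hD b := by
    intro a b
    unfold chiMul
    rw [← MemLp.toLp_sub]
    apply MemLp.toLp_congr
    filter_upwards [Lp.coeFn_sub a b] with x hx
    by_cases hxD : x ∈ D
    · rw [Pi.sub_apply, Set.indicator_of_mem hxD, Set.indicator_of_mem hxD,
        Set.indicator_of_mem hxD, hx, Pi.sub_apply]
    · rw [Pi.sub_apply, Set.indicator_of_notMem hxD, Set.indicator_of_notMem hxD,
        Set.indicator_of_notMem hxD, sub_zero]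
  have hxy : chiMul hD (h - f) - chiMul hD (h - g) = -(chiMul hD (f - g)) := by
    rw [← key, show (h - f) - (h - g) = g - f by abel, key g f, key f g]
    abel
  set A : L2Space N := c • (f - g) - τ • chiMul hD (f - g) with hA
  have harg : (c • f + τ • chiMul hD (h - f)) - (c • g + τ • chiMul hD (h - g)) = A := by
    have h1 : (c • f + τ • chiMul hD (h - f)) - (c • g + τ • chiMul hD (h - g))
        = c • (f - g) + τ • (chiMul hD (h - f) - chiMul hD (h - g)) := by module
    rw [h1, hxy, hA]
    module
  have eqT : TsingleReg K hK hD μ τ h f - TsingleReg K hK hD μ τ h g = projOf K hK A := by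
    simp only [TsingleReg, projOf]
    rw [← Submodule.coe_sub, ← map_sub, harg]
  have hproj : ‖projOf K hK A‖ ≤ ‖A‖ := by
    simp only [projOf]
    calc ‖(K.orthogonalProjectionOnto A : L2Space N)‖ = ‖K.orthogonalProjectionOnto A‖ := rfl
      _ ≤ ‖K.orthogonalProjectionOnto‖ * ‖A‖ := (K.orthogonalProjectionOnto).le_opNorm A
      _ ≤ 1 * ‖A‖ := by
          exact mul_le_mul_of_nonneg_right (Submodule.orthogonalProjectionOnto_norm_le K) (norm_nonneg A)
      _ = ‖A‖ := one_mul _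
  have hchicoe : (chiMul hD (f - g) : _ → ℂ) =ᵐ[volume]
      D.indicator ((f - g : L2Space N) : _ → ℂ) := MemLp.coeFn_toLp _
  have hAle : ‖A‖ ≤ c * ‖f - g‖ := by
    apply Lp.norm_le_mul_norm_of_ae_le_mul
    filter_upwards [Lp.coeFn_sub (c • (f - g)) (τ • chiMul hD (f - g)),
      Lp.coeFn_smul c (f - g), Lp.coeFn_smul τ (chiMul hD (f - g)), hchicoe] with x h1 h2 h3 h4
    have hAx : (A : _ → ℂ) x = c • ((f - g : L2Space N) : _ → ℂ) x -
        τ • D.indicator ((f - g : L2Space N) : _ → ℂ) x := by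
      rw [hA, h1, Pi.sub_apply, h2, h3, Pi.smul_apply, Pi.smul_apply, h4]
    rw [hAx]
    set v : ℂ := ((f - g : L2Space N) : _ → ℂ) x
    by_cases hxD : x ∈ D
    · rw [Set.indicator_of_mem hxD, ← sub_smul, norm_smul]
      have habs : ‖c - τ‖ ≤ c := by
        rw [Real.norm_eq_abs, abs_le]
        constructor <;> [nlinarith; linarith]
      exact mul_le_mul_of_nonneg_right habs (norm_nonneg v)
    · rw [Set.indicator_of_notMem hxD, smul_zero, sub_zero, norm_smul, Real.norm_eq_abs,
        abs_of_pos hc0]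
  calc ‖TsingleReg K hK hD μ τ h f - TsingleReg K hK hD μ τ h g‖
      = ‖projOf K hK A‖ := by rw [eqT]
    _ ≤ ‖A‖ := hproj
    _ ≤ c * ‖f - g‖ := hAle
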